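/- Let p be an odd prime and let G be a finite semi-extraspecial p-group. If G has an automorphism φ that acts transitively on the nontrivial cosets of Z(G) in G (i.e., for all x, y ∈ G with x ∉ Z(G) and y ∉ Z(G) there exists a natural number n with φ^n(x)·y⁻¹ ∈ Z(G)), then G has exponent p, that is, g^p = 1 for every g ∈ G. -/

import Mathlib

/-- A finite `p`-group `G` is extraspecial if `|Z(G)| = p` and `Z(G) = [G,G]`. -/
def IsExtraspecial (p : ℕ) (G : Type*) [Group G] : Prop :=
  Nat.card (Subgroup.center G) = p ∧ Subgroup.center G = commutator G

/-- A finite `p`-group `G` is semi-extraspecial if `G/N` is extraspecial for every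
maximal subgroup `N` of the center `Z(G)`. -/
def IsSemiExtraspecial (p : ℕ) (G : Type*) [Group G] : Prop :=
  ∀ (N : Subgroup G) [N.Normal], N ≤ Subgroup.center G →
    IsCoatom (N.subgroupOf (Subgroup.center G)) →
    IsExtraspecial p (G ⧸ N)

open scoped commutatorElement

section Aux

open Subgroup

variable {G : Type*} [Group G]

private lemma normal_of_le_center' {N : Subgroup G} (h : N ≤ Subgroup.center G) : N.Normal := by
  constructor
  intro n hn g
  have hc := (Subgroup.mem_center_iff.mp (h hn)) g
  have : g * n * g⁻¹ = n := by rw [hc]; group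
  rwa [this]

private lemma swap_pow (a b c : G) (hc : ∀ x : G, Commute x c)
    (h : a * b = c * (b * a)) : ∀ n : ℕ, a ^ n * b = c ^ n * (b * a ^ n)
  | 0 => by simp
  | n + 1 => by
    have ih := swap_pow a b c hc h n
    have hca : a * c ^ n = c ^ n * a := ((hc a).pow_right n).eq
    calc a ^ (n + 1) * b = a * (a ^ n * b) := by rw [pow_succ']; group
      _ = a * (c ^ n * (b * a ^ n)) := by rw [ih]
      _ = (a * c ^ n) * (b * a ^ n) := by rw [mul_assoc]
      _ = (c ^ n * a) * (b * a ^ n) := by rw [hca]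
      _ = c ^ n * ((a * b) * a ^ n) := by group
      _ = c ^ n * ((c * (b * a)) * a ^ n) := by rw [h]
      _ = c ^ (n + 1) * (b * a ^ (n + 1)) := by rw [pow_succ, pow_succ']; group

private lemma commutator_pow_left (a b : G) (hc : ∀ x : G, Commute x ⁅a, b⁆) (n : ℕ) :
    ⁅a ^ n, b⁆ = ⁅a, b⁆ ^ n := by
  have h : a * b = ⁅a, b⁆ * (b * a) := by rw [commutatorElement_def]; group
  have key := swap_pow a b ⁅a, b⁆ hc h n
  rw [commutatorElement_def, key]
  group

private lemma central_mul_pow (x y c : G) (hc : ∀ g : G, Commute g c)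
    (h : y * x = c * (x * y)) : ∀ n : ℕ, (x * y) ^ n = x ^ n * y ^ n * c ^ n.choose 2
  | 0 => by simp
  | n + 1 => by
    have ih := central_mul_pow x y c hc h n
    have hswap := swap_pow y x c hc h n
    have hcc : ∀ k : ℕ, ∀ g : G, g * c ^ k = c ^ k * g := fun k g => ((hc g).pow_right k).eq
    have hch : (n + 1).choose 2 = n.choose 2 + n := by
      rw [show (2 : ℕ) = 1 + 1 from rfl, Nat.choose_succ_succ, Nat.choose_one_right,
        Nat.add_comm]
    have hxy := hcc (n.choose 2) (x * y)
    calc (x * y) ^ (n + 1) = (x * y) ^ n * (x * y) := pow_succ _ _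
      _ = x ^ n * y ^ n * c ^ n.choose 2 * (x * y) := by rw [ih]
      _ = x ^ n * y ^ n * (x * y) * c ^ n.choose 2 := by
          rw [mul_assoc (x ^ n * y ^ n), ← hxy, ← mul_assoc]
      _ = x ^ n * (y ^ n * x) * y * c ^ n.choose 2 := by group
      _ = x ^ n * (c ^ n * (x * y ^ n)) * y * c ^ n.choose 2 := by rw [hswap]
      _ = x ^ n * c ^ n * (x * y ^ n * y) * c ^ n.choose 2 := by group
      _ = c ^ n * x ^ n * (x * y ^ n * y) * c ^ n.choose 2 := by rw [hcc n (x ^ n)]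
      _ = c ^ n * (x ^ (n + 1) * y ^ (n + 1) * c ^ n.choose 2) := by
          rw [pow_succ' x, pow_succ y]; group
      _ = x ^ (n + 1) * y ^ (n + 1) * c ^ n.choose 2 * c ^ n :=
          (hcc n (x ^ (n + 1) * y ^ (n + 1) * c ^ n.choose 2)).symm
      _ = x ^ (n + 1) * y ^ (n + 1) * c ^ ((n + 1).choose 2) := by rw [hch, pow_add]; group

private lemma comm_mul_right (x y z : G)
    (h1 : ∀ w : G, Commute w ⁅x, z⁆) : ⁅x, y * z⁆ = ⁅x, y⁆ * ⁅x, z⁆ := by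
  have key : ⁅x, y * z⁆ = ⁅x, y⁆ * (y * ⁅x, z⁆ * y⁻¹) := by
    simp only [commutatorElement_def]; group
  rw [key, (h1 y).eq]
  group

private lemma pullback_center (N : Subgroup G) [N.Normal] (hNle : N ≤ Subgroup.center G)
    (c : G) (hc : (QuotientGroup.mk' N) c ∈ (Subgroup.center G).map (QuotientGroup.mk' N)) :
    c ∈ Subgroup.center G := by
  obtain ⟨z, hz, hzc⟩ := hc
  have hmem : z⁻¹ * c ∈ N := by
    have : (QuotientGroup.mk' N) (z⁻¹ * c) = 1 := by
      rw [map_mul, map_inv, hzc, inv_mul_cancel]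
    rwa [QuotientGroup.mk'_apply, QuotientGroup.eq_one_iff] at this
  have hc2 : c = z * (z⁻¹ * c) := by group
  rw [hc2]
  exact Subgroup.mul_mem _ hz (hNle hmem)

private lemma coatomize [Finite G] (S : Subgroup G) (hS : S ≤ Subgroup.center G)
    (hne : ∃ z ∈ Subgroup.center G, z ∉ S) :
    ∃ N : Subgroup G, N.Normal ∧ N ≤ Subgroup.center G ∧
      IsCoatom (N.subgroupOf (Subgroup.center G)) ∧ S ≤ N := by
  obtain ⟨z, hzZ, hzS⟩ := hne
  haveI : Finite (Subgroup (Subgroup.center G)) :=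
    Finite.of_injective _ SetLike.coe_injective
  have hSnt : S.subgroupOf (Subgroup.center G) ≠ ⊤ := by
    intro h
    have : (⟨z, hzZ⟩ : Subgroup.center G) ∈ S.subgroupOf (Subgroup.center G) :=
      h ▸ Subgroup.mem_top _
    exact hzS (Subgroup.mem_subgroupOf.mp this)
  obtain ⟨M, hM, hMge⟩ :=
    (eq_top_or_exists_le_coatom (S.subgroupOf (Subgroup.center G))).resolve_left hSnt
  refine ⟨M.map (Subgroup.center G).subtype, ?_, Subgroup.map_subtype_le M, ?_, ?_⟩
  · exact normal_of_le_center' (Subgroup.map_subtype_le M)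
  · have : (M.map (Subgroup.center G).subtype).subgroupOf (Subgroup.center G) = M :=
      Subgroup.comap_map_eq_self_of_injective (Subgroup.subtype_injective _) M
    rw [this]; exact hM
  · calc S = (S.subgroupOf (Subgroup.center G)).map (Subgroup.center G).subtype := by
          rw [Subgroup.subgroupOf_map_subtype, inf_eq_left.mpr hS]
      _ ≤ M.map (Subgroup.center G).subtype := Subgroup.map_mono hMge

private lemma quotfacts {p : ℕ} (hp : p.Prime) [Finite G] (hses : IsSemiExtraspecial p G)
    (N : Subgroup G) [N.Normal] (hNle : N ≤ Subgroup.center G)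
    (hNco : IsCoatom (N.subgroupOf (Subgroup.center G))) :
    (Subgroup.center G).map (QuotientGroup.mk' N) = Subgroup.center (G ⧸ N) ∧
      Nat.card (Subgroup.center (G ⧸ N)) = p ∧
      Subgroup.center (G ⧸ N) = commutator (G ⧸ N) := by
  obtain ⟨hcard, hcomm⟩ := hses N hNle hNco
  have hle : (Subgroup.center G).map (QuotientGroup.mk' N) ≤ Subgroup.center (G ⧸ N) := by
    rintro _ ⟨z, hz, rfl⟩
    rw [Subgroup.mem_center_iff]
    intro q
    obtain ⟨y, rfl⟩ := QuotientGroup.mk'_surjective N q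
    rw [← map_mul, ← map_mul, (Subgroup.mem_center_iff.mp hz) y]
  have hnontriv : Nat.card ((Subgroup.center G).map (QuotientGroup.mk' N)) ≠ 1 := by
    obtain ⟨z, hzmem⟩ : ∃ z : Subgroup.center G, z ∉ N.subgroupOf (Subgroup.center G) := by
      by_contra h
      push_neg at h
      exact hNco.1 ((Subgroup.eq_top_iff' _).mpr h)
    rw [Ne, Subgroup.card_eq_one]
    intro hbot
    have hmem : (QuotientGroup.mk' N) (z : G) ∈ (Subgroup.center G).map (QuotientGroup.mk' N) :=
      ⟨z, z.2, rfl⟩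
    rw [hbot, Subgroup.mem_bot, QuotientGroup.mk'_apply, QuotientGroup.eq_one_iff] at hmem
    exact hzmem (Subgroup.mem_subgroupOf.mpr hmem)
  have hdvd := Subgroup.card_dvd_of_le hle
  rw [hcard] at hdvd
  have hcardmap : Nat.card ((Subgroup.center G).map (QuotientGroup.mk' N)) = p :=
    (hp.eq_one_or_self_of_dvd _ hdvd).resolve_left hnontriv
  have heq : (Subgroup.center G).map (QuotientGroup.mk' N) = Subgroup.center (G ⧸ N) :=
    Subgroup.eq_of_le_of_card_ge hle (by rw [hcard, hcardmap])
  exact ⟨heq, hcard, hcomm⟩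

end Aux

theorem stmt_4 (p : ℕ) (hp : p.Prime) (hodd : Odd p) (G : Type*) [Group G] [Finite G]
    (hpG : IsPGroup p G) (hses : IsSemiExtraspecial p G)
    (φ : MulAut G)
    (htrans : ∀ x y : G, x ∉ Subgroup.center G → y ∉ Subgroup.center G →
      ∃ n : ℕ, (φ ^ n) x * y⁻¹ ∈ Subgroup.center G) :
    ∀ g : G, g ^ p = 1 := by
  classical
  haveI : Fact p.Prime := ⟨hp⟩
  rcases subsingleton_or_nontrivial G with hG | hG
  · intro g; rw [Subsingleton.elim (g ^ p) (1 : G)]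
  haveI hZnt : Nontrivial (Subgroup.center G) := hpG.center_nontrivial
  -- a first coatom
  obtain ⟨N₀, hN₀nor, hN₀le, hN₀co, -⟩ := coatomize (⊥ : Subgroup G) bot_le (by
    obtain ⟨z, hz⟩ := exists_ne (1 : Subgroup.center G)
    exact ⟨(z : G), z.2, by simpa [Subgroup.mem_bot] using fun h => hz (Subtype.ext h)⟩)
  haveI := hN₀nor
  obtain ⟨hZbar₀, hcard₀, hcomm₀⟩ := quotfacts hp hses N₀ hN₀le hN₀co
  -- commutators are central
  have hB : ∀ g h : G, ⁅g, h⁆ ∈ Subgroup.center G := by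
    intro g h
    refine pullback_center N₀ hN₀le _ ?_
    rw [hZbar₀, map_commutatorElement, hcomm₀, commutator_def]
    exact Subgroup.commutator_mem_commutator (Subgroup.mem_top _) (Subgroup.mem_top _)
  have hBc : ∀ g h x : G, Commute x ⁅g, h⁆ := fun g h x =>
    (Subgroup.mem_center_iff.mp (hB g h)) x
  -- p-th powers are central
  have hC : ∀ g : G, g ^ p ∈ Subgroup.center G := by
    intro g
    refine pullback_center N₀ hN₀le _ ?_
    rw [hZbar₀, map_pow]
    set π := QuotientGroup.mk' N₀ with hπ
    rw [Subgroup.mem_center_iff]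
    intro q
    obtain ⟨h, rfl⟩ := QuotientGroup.mk'_surjective N₀ q
    have hmemc : ⁅π g, π h⁆ ∈ Subgroup.center (G ⧸ N₀) := by
      rw [hcomm₀, commutator_def]
      exact Subgroup.commutator_mem_commutator (Subgroup.mem_top _) (Subgroup.mem_top _)
    have hcent : ∀ x, Commute x ⁅π g, π h⁆ := fun x =>
      (Subgroup.mem_center_iff.mp hmemc) x
    have h1 : ⁅(π g) ^ p, π h⁆ = ⁅π g, π h⁆ ^ p := commutator_pow_left _ _ hcent p
    have h2 : ⁅π g, π h⁆ ^ p = 1 := by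
      have hpow := pow_card_eq_one' (x := (⟨_, hmemc⟩ : Subgroup.center (G ⧸ N₀)))
      rw [hcard₀] at hpow
      simpa [Subtype.ext_iff] using hpow
    have h3 : ⁅(π g) ^ p, π h⁆ = 1 := by rw [h1, h2]
    exact (commutatorElement_eq_one_iff_mul_comm.mp h3).symm
  -- commutator subgroup is contained in the center
  have hcommle : commutator G ≤ Subgroup.center G := by
    rw [commutator_eq_closure]
    refine (Subgroup.closure_le _).mpr ?_
    rintro _ ⟨g, h, rfl⟩
    exact hB g h
  -- the center is contained in the commutator subgroup
  have hZcomm : Subgroup.center G ≤ commutator G := by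
    by_contra hnc
    have hne : ∃ z ∈ Subgroup.center G, z ∉ commutator G := by
      by_contra h; push_neg at h; exact hnc h
    obtain ⟨N, hNnor, hNle, hNco, hSN⟩ := coatomize (commutator G) hcommle hne
    haveI := hNnor
    obtain ⟨hZbar, hcard, hcomm⟩ := quotfacts hp hses N hNle hNco
    have hbot : commutator (G ⧸ N) = ⊥ := by
      rw [commutator_def, ← Subgroup.map_top_of_surjective _ (QuotientGroup.mk'_surjective N),
        ← Subgroup.map_commutator, ← commutator_def, eq_bot_iff]
      rintro _ ⟨c, hc, rfl⟩
      rw [Subgroup.mem_bot, QuotientGroup.mk'_apply, QuotientGroup.eq_one_iff]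
      exact hSN hc
    rw [hcomm, hbot, Subgroup.card_bot] at hcard
    exact hp.one_lt.ne' hcard.symm
  -- commutators have order dividing p
  have hordp : ∀ g h : G, ⁅g, h⁆ ^ p = 1 := by
    intro g h
    rw [← commutator_pow_left g h (hBc g h) p]
    exact commutatorElement_eq_one_iff_mul_comm.mpr
      ((Subgroup.mem_center_iff.mp (hC g)) h).symm
  -- the center has exponent p
  have hE : ∀ z ∈ Subgroup.center G, z ^ p = 1 := by
    intro z hz
    have hzc : z ∈ commutator G := hZcomm hz
    rw [commutator_eq_closure] at hzc
    refine (Subgroup.closure_induction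
      (p := fun x _ => x ∈ Subgroup.center G ∧ x ^ p = 1) ?_ ?_ ?_ ?_ hzc).2
    · rintro _ ⟨g, h, rfl⟩
      exact ⟨hB g h, hordp g h⟩
    · exact ⟨Subgroup.one_mem _, one_pow p⟩
    · rintro x y hx hy ⟨hxZ, hxp⟩ ⟨hyZ, hyp⟩
      refine ⟨Subgroup.mul_mem _ hxZ hyZ, ?_⟩
      have hcom : Commute x y := (Subgroup.mem_center_iff.mp hxZ y).symm
      rw [hcom.mul_pow, hxp, hyp, one_mul]
    · rintro x hx ⟨hxZ, hxp⟩
      exact ⟨Subgroup.inv_mem _ hxZ, by rw [inv_pow, hxp, inv_one]⟩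
  -- the p-th power map is multiplicative
  have hmulpow : ∀ x y : G, (x * y) ^ p = x ^ p * y ^ p := by
    intro x y
    have h : y * x = ⁅y, x⁆ * (x * y) := by rw [commutatorElement_def]; group
    have hkey := central_mul_pow x y ⁅y, x⁆ (hBc y x) h p
    obtain ⟨m, hm⟩ := hodd
    have hc2 : p.choose 2 = p * m := by
      rw [Nat.choose_two_right, show p - 1 = 2 * m by omega,
        show p * (2 * m) = 2 * (p * m) by ring, Nat.mul_div_cancel_left _ (by norm_num)]
    rw [hkey, hc2, pow_mul, hordp y x, one_pow, mul_one]
  -- main argument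
  intro g
  by_cases hg : g ∈ Subgroup.center G
  · exact hE g hg
  by_cases hcase : ∃ x, x ∉ Subgroup.center G ∧ x ^ p = 1
  · obtain ⟨x, hx, hxp⟩ := hcase
    obtain ⟨n, hn⟩ := htrans x g hx hg
    have hgz : g = ((φ ^ n) x * g⁻¹)⁻¹ * (φ ^ n) x := by group
    have hcom : Commute (((φ ^ n) x * g⁻¹)⁻¹) ((φ ^ n) x) :=
      ((Subgroup.mem_center_iff.mp (Subgroup.inv_mem _ hn)) ((φ ^ n) x)).symm
    rw [hgz, hcom.mul_pow, inv_pow, hE _ hn, ← map_pow, hxp, map_one, inv_one, one_mul]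
  · push_neg at hcase
    exfalso
    -- the commutator-with-g homomorphism
    let fx : G →* G :=
      { toFun := fun y => ⁅g, y⁆
        map_one' := commutatorElement_one_right g
        map_mul' := fun y w => comm_mul_right g y w (hBc g w) }
    have hrange_le : fx.range ≤ Subgroup.center G := by
      rintro _ ⟨y, rfl⟩; exact hB g y
    have hrange : fx.range = Subgroup.center G := by
      by_contra hnec
      have hne : ∃ z ∈ Subgroup.center G, z ∉ fx.range := by
        by_contra h; push_neg at h
        exact hnec (le_antisymm hrange_le h)
      obtain ⟨N, hNnor, hNle, hNco, hSN⟩ := coatomize fx.range hrange_le hne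
      haveI := hNnor
      obtain ⟨hZbar, hcard, hcomm⟩ := quotfacts hp hses N hNle hNco
      have hcentral : (QuotientGroup.mk' N) g ∈ Subgroup.center (G ⧸ N) := by
        rw [Subgroup.mem_center_iff]
        intro q
        obtain ⟨y, rfl⟩ := QuotientGroup.mk'_surjective N q
        have hmem : ⁅g, y⁆ ∈ N := hSN ⟨y, rfl⟩
        have h1 : ⁅(QuotientGroup.mk' N) g, (QuotientGroup.mk' N) y⁆ = 1 := by
          rw [← map_commutatorElement, QuotientGroup.mk'_apply, QuotientGroup.eq_one_iff]
          exact hmem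
        exact (commutatorElement_eq_one_iff_mul_comm.mp h1).symm
      exact hg (pullback_center N hNle g (hZbar ▸ hcentral))
    -- the p-th power homomorphism
    let P : G →* G :=
      { toFun := fun y => y ^ p
        map_one' := one_pow p
        map_mul' := hmulpow }
    have hkerP : P.ker = Subgroup.center G := by
      apply le_antisymm
      · intro a ha
        by_contra hc
        exact hcase a hc (MonoidHom.mem_ker.mp ha)
      · intro z hz
        exact MonoidHom.mem_ker.mpr (hE z hz)
    have hrangeP : P.range ≤ Subgroup.center G := by
      rintro _ ⟨y, rfl⟩; exact hC y
    -- cardinality computations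
    have e1 : Nat.card G = Nat.card (Subgroup.center G) * Nat.card fx.ker := by
      rw [Subgroup.card_eq_card_quotient_mul_card_subgroup fx.ker]
      congr 1
      rw [← hrange]
      exact Nat.card_congr (QuotientGroup.quotientKerEquivRange fx).toEquiv
    have e2 : Nat.card G = Nat.card P.range * Nat.card (Subgroup.center G) := by
      rw [Subgroup.card_eq_card_quotient_mul_card_subgroup P.ker]
      rw [hkerP]
      congr 1
      rw [← hkerP]
      exact Nat.card_congr (QuotientGroup.quotientKerEquivRange P).toEquiv
    have hZker : Subgroup.center G ≤ fx.ker := by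
      intro z hz
      exact MonoidHom.mem_ker.mpr (commutatorElement_eq_one_iff_mul_comm.mpr
        (Subgroup.mem_center_iff.mp hz g))
    have hgker : g ∈ fx.ker := MonoidHom.mem_ker.mpr (commutatorElement_self g)
    have hker_ge : p * Nat.card (Subgroup.center G) ≤ Nat.card fx.ker := by
      set K := fx.ker with hK
      set Z' := (Subgroup.center G).subgroupOf K with hZ'
      haveI : Z'.Normal := normal_of_le_center' (by
        intro z hz
        rw [Subgroup.mem_center_iff]
        intro k
        exact Subtype.ext ((Subgroup.mem_center_iff.mp (Subgroup.mem_subgroupOf.mp hz)) k))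
      have hcardZ' : Nat.card Z' = Nat.card (Subgroup.center G) :=
        Nat.card_congr (Subgroup.subgroupOfEquivOfLe hZker).toEquiv
      have hKcard : Nat.card K = Nat.card (K ⧸ Z') * Nat.card Z' :=
        Subgroup.card_eq_card_quotient_mul_card_subgroup Z'
      haveI hnt : Nontrivial (K ⧸ Z') := by
        refine ⟨⟨QuotientGroup.mk (⟨g, hgker⟩ : K), 1, ?_⟩⟩
        rw [Ne, QuotientGroup.eq_one_iff]
        intro hmem
        exact hg (Subgroup.mem_subgroupOf.mp hmem)
      obtain ⟨m, hm⟩ := ((hpG.to_subgroup K).to_quotient Z').exists_card_eq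
      have hm1 : 1 ≤ m := by
        rcases Nat.eq_zero_or_pos m with rfl | h
        · exfalso
          rw [pow_zero] at hm
          have := Finite.one_lt_card_iff_nontrivial.mpr hnt
          omega
        · exact h
      calc p * Nat.card (Subgroup.center G) = p ^ 1 * Nat.card Z' := by rw [pow_one, hcardZ']
        _ ≤ p ^ m * Nat.card Z' := by
            have : (0:ℕ) < Nat.card Z' := Nat.card_pos
            exact Nat.mul_le_mul_right _ (Nat.pow_le_pow_right hp.pos hm1)
        _ = Nat.card (K ⧸ Z') * Nat.card Z' := by rw [hm]
        _ = Nat.card K := hKcard.symm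
    have hZpos : 0 < Nat.card (Subgroup.center G) := Nat.card_pos
    have hle : Nat.card P.range ≤ Nat.card (Subgroup.center G) :=
      Subgroup.card_le_of_le hrangeP
    nlinarith [e1, e2, hker_ge, hZpos, hp.two_le, hle]
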